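/- Let k ≥ 2 be a power of 2, let n, m be positive integers, and let p ∈ (0,1] satisfy m·p^(log k − 1) > 30 and p < 1/30. Let s ∈ {0,1}^k with s ≠ 0^k and let σ = stex(s). Then for all tuples ℓ, ℓ' ∈ [n]^k with δ(ℓ,ℓ') = s: E[C_ℓ · C_{ℓ'}] ≤ (p^(k+σ+1) / (m·p^(log k + 1))²) · [(1 − p)^(−1)·(1 + 30/(m·p^(log k)))]^(k+σ+1). -/

import Mathlib

/-- `⟨s⟩`: the set of integers `{-⌊s/2⌋, …, ⌊s/2⌋}`. -/
noncomputable def intRange (s : ℝ) : Finset ℤ := Finset.Icc (-⌊s / 2⌋) ⌊s / 2⌋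

/-- A tuple `ℓ ∈ [n]^k` (with `k = 2^κ`) is *successful* for the lists `L` and filtering
parameter `p` if every partial block sum at level `d ∈ {1,…,κ}` lies in `⟨m·p^d⟩`, and the
total sum is `0`. -/
def Successful (κ n m : ℕ) (p : ℝ) (L : Fin (2 ^ κ) → Fin n → ℤ)
    (ℓ : Fin (2 ^ κ) → Fin n) : Prop :=
  (∀ d ∈ Finset.Icc 1 κ, ∀ i < 2 ^ (κ - d),
      (∑ j : Fin (2 ^ κ),
          if i * 2 ^ d ≤ (j : ℕ) ∧ (j : ℕ) < (i + 1) * 2 ^ d then L j (ℓ j) else 0)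
        ∈ intRange ((m : ℝ) * p ^ d)) ∧
    (∑ j : Fin (2 ^ κ), L j (ℓ j)) = 0

/-- `E[C_ℓ · C_ℓ']`: the probability (over the uniformly random lists) that both tuples
`ℓ` and `ℓ'` are successful, i.e. the expectation of the product of the two indicators. -/
noncomputable def expPair (κ n m : ℕ) (p : ℝ) (ℓ ℓ' : Fin (2 ^ κ) → Fin n) : ℝ :=
  (Nat.card {L : Fin (2 ^ κ) → Fin n → ↥(intRange (m : ℝ)) //
      Successful κ n m p (fun i j => (L i j : ℤ)) ℓ ∧
        Successful κ n m p (fun i j => (L i j : ℤ)) ℓ'} : ℝ) /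
    (Fintype.card (Fin (2 ^ κ) → Fin n → ↥(intRange (m : ℝ))) : ℝ)

/-- `stex s = Σ_{d=1}^{κ} Σ_i s^d_i`, where `s^d_i` is the max (i.e. the OR) of the bits of
`s` over the `i`-th block of size `2^d`. -/
def stex (κ : ℕ) (s : Fin (2 ^ κ) → Bool) : ℕ :=
  ∑ d ∈ Finset.Icc 1 κ, ∑ i ∈ Finset.range (2 ^ (κ - d)),
    if ∃ j : Fin (2 ^ κ), i * 2 ^ d ≤ (j : ℕ) ∧ (j : ℕ) < (i + 1) * 2 ^ d ∧ s j = true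
    then 1 else 0

namespace KTB

def sb (κ : ℕ) (s : Fin (2^κ) → Bool) (j : ℕ) : Bool :=
  if h : j < 2^κ then s ⟨j, h⟩ else false

def aff (κ : ℕ) (s : Fin (2^κ) → Bool) : ℕ → ℕ → Bool
  | 0, i => sb κ s i
  | d+1, i => aff κ s d (2*i) || aff κ s d (2*i+1)

def wt (κ : ℕ) (s : Fin (2^κ) → Bool) : ℕ → ℕ → ℕ
  | 0, i => cond (sb κ s i) 1 0
  | d+1, i => wt κ s d (2*i) + wt κ s d (2*i+1)

def sg (κ : ℕ) (s : Fin (2^κ) → Bool) : ℕ → ℕ → ℕ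
  | 0, _ => 0
  | d+1, i => sg κ s d (2*i) + sg κ s d (2*i+1) + (cond (aff κ s (d+1) i) 1 0)

noncomputable def Wc (m : ℕ) (p : ℝ) (e : ℕ) : ℕ := (intRange ((m:ℝ)*p^e)).card

noncomputable def bnd (κ : ℕ) (s : Fin (2^κ) → Bool) (m : ℕ) (p : ℝ) : ℕ → ℕ → ℕ
  | 0, _ => 1
  | d+1, i => Wc m p d * (if aff κ s d (2*i) && aff κ s d (2*i+1) then Wc m p d else 1)
      * bnd κ s m p d (2*i) * bnd κ s m p d (2*i+1)

def Aexp (κ : ℕ) (s : Fin (2^κ) → Bool) : ℕ → ℕ → ℕ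
  | 0, _ => 0
  | d+1, i => (if aff κ s d (2*i) && aff κ s d (2*i+1) then 2 else 1)
      + Aexp κ s d (2*i) + Aexp κ s d (2*i+1)

def Pexp (κ : ℕ) (s : Fin (2^κ) → Bool) : ℕ → ℕ → ℕ
  | 0, _ => 0
  | d+1, i => d * (if aff κ s d (2*i) && aff κ s d (2*i+1) then 2 else 1)
      + Pexp κ s d (2*i) + Pexp κ s d (2*i+1)

def bsum (κ : ℕ) (x : Fin (2^κ) → ℤ) (d i : ℕ) : ℤ :=
  ∑ j : Fin (2^κ), if i * 2^d ≤ (j:ℕ) ∧ (j:ℕ) < (i+1) * 2^d then x j else 0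

lemma blk_split (d i j : ℕ) :
    (i*2^(d+1) ≤ j ∧ j < (i+1)*2^(d+1)) ↔
      ((2*i)*2^d ≤ j ∧ j < (2*i+1)*2^d) ∨ ((2*i+1)*2^d ≤ j ∧ j < (2*i+2)*2^d) := by
  have h1 : i*2^(d+1) = (2*i)*2^d := by ring
  have h2 : (i+1)*2^(d+1) = (2*i+2)*2^d := by ring
  have h3 : (2*i+1)*2^d = (2*i)*2^d + 2^d := by ring
  have h4 : (2*i+2)*2^d = (2*i+1)*2^d + 2^d := by ring
  omega

lemma bsum_split (x : Fin (2^κ) → ℤ) (d i : ℕ) :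
    bsum κ x (d+1) i = bsum κ x d (2*i) + bsum κ x d (2*i+1) := by
  unfold bsum
  rw [← Finset.sum_add_distrib]
  refine Finset.sum_congr rfl fun j _ => ?_
  have hs := blk_split d i (j:ℕ)
  have h3 : (2*i+1)*2^d = (2*i)*2^d + 2^d := by ring
  by_cases hQ : (2*i)*2^d ≤ (j:ℕ) ∧ (j:ℕ) < (2*i+1)*2^d <;>
    by_cases hQ' : (2*i+1)*2^d ≤ (j:ℕ) ∧ (j:ℕ) < (2*i+2)*2^d
  · omega
  · rw [if_pos (hs.mpr (Or.inl hQ)), if_pos hQ, if_neg hQ', add_zero]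
  · rw [if_pos (hs.mpr (Or.inr hQ')), if_neg hQ, if_pos hQ', zero_add]
  · rw [if_neg (fun h => by rcases hs.mp h with h' | h' <;> [exact hQ h'; exact hQ' h']),
      if_neg hQ, if_neg hQ', add_zero]

lemma blk_sub {e d i' i : ℕ} (he : e ≤ d) (h1 : i*2^(d-e) ≤ i') (h2 : i' < (i+1)*2^(d-e)) :
    ∀ j, i'*2^e ≤ j ∧ j < (i'+1)*2^e → i*2^d ≤ j ∧ j < (i+1)*2^d := by
  intro j hj
  have hp : 2^d = 2^(d-e)*2^e := by rw [← pow_add]; congr 1; omega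
  have l1 : i*2^d = (i*2^(d-e))*2^e := by rw [hp]; ring
  have l2 : (i+1)*2^d = ((i+1)*2^(d-e))*2^e := by rw [hp]; ring
  constructor
  · rw [l1]; exact le_trans (Nat.mul_le_mul_right _ h1) hj.1
  · rw [l2]; exact lt_of_lt_of_le hj.2 (Nat.mul_le_mul_right _ (by omega))

lemma bsum_mask (x : Fin (2^κ) → ℤ) {d i e i' : ℕ}
    (h : ∀ j, i'*2^e ≤ j ∧ j < (i'+1)*2^e → i*2^d ≤ j ∧ j < (i+1)*2^d) :
    bsum κ (fun j => if i*2^d ≤ (j:ℕ) ∧ (j:ℕ) < (i+1)*2^d then x j else 0) e i'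
      = bsum κ x e i' := by
  refine Finset.sum_congr rfl fun j _ => ?_
  beta_reduce
  by_cases hj : i'*2^e ≤ (j:ℕ) ∧ (j:ℕ) < (i'+1)*2^e
  · rw [if_pos hj, if_pos hj, if_pos (h _ hj)]
  · rw [if_neg hj, if_neg hj]

lemma aff_iff (κ : ℕ) (s : Fin (2^κ) → Bool) (d i : ℕ) :
    aff κ s d i = true ↔ ∃ j, (i*2^d ≤ j ∧ j < (i+1)*2^d) ∧ sb κ s j = true := by
  induction d generalizing i with
  | zero =>
    simp only [aff, pow_zero, mul_one]
    constructor
    · exact fun h => ⟨i, ⟨le_refl _, by omega⟩, h⟩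
    · rintro ⟨j, ⟨h1, h2⟩, h3⟩; have : j = i := by omega
      rwa [this] at h3
  | succ d ih =>
    simp only [aff, Bool.or_eq_true, ih]
    constructor
    · rintro (⟨j, hj, h⟩ | ⟨j, hj, h⟩) <;> exact ⟨j, (blk_split d i j).mpr (by tauto), h⟩
    · rintro ⟨j, hj, h⟩
      rcases (blk_split d i j).mp hj with h' | h'
      · exact Or.inl ⟨j, h', h⟩
      · exact Or.inr ⟨j, h', h⟩

end KTB

namespace KTB

lemma zero_mem_intRange {r : ℝ} (hr : 0 ≤ r) : (0:ℤ) ∈ intRange r := by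
  rw [intRange, Finset.mem_Icc]
  have : (0:ℤ) ≤ ⌊r/2⌋ := Int.floor_nonneg.mpr (by positivity)
  omega

lemma nat_card_le_one {α : Type*} [Subsingleton α] : Nat.card α ≤ 1 := by
  have h := Nat.card_le_card_of_injective (fun _ : α => ())
    (fun a b _ => Subsingleton.elim a b)
  simpa using h

lemma nat_card_sigma_le {ι : Type*} [Fintype ι] {T : ι → Type*} [∀ u, Finite (T u)]
    (b : ℕ) (hb : ∀ u, Nat.card (T u) ≤ b) : Nat.card (Σ u, T u) ≤ Fintype.card ι * b := by
  classical
  letI : ∀ u, Fintype (T u) := fun u => Fintype.ofFinite _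
  rw [Nat.card_eq_fintype_card, Fintype.card_sigma]
  calc ∑ u, Fintype.card (T u) ≤ ∑ _u : ι, b :=
        Finset.sum_le_sum (fun u _ => by rw [← Nat.card_eq_fintype_card]; exact hb u)
    _ = Fintype.card ι * b := by rw [Finset.sum_const, smul_eq_mul, Finset.card_univ]

def SolP (κ : ℕ) (s : Fin (2^κ) → Bool) (m : ℕ) (p : ℝ) (d i : ℕ) (t1 t2 : ℤ)
    (x y : Fin (2^κ) → ℤ) : Prop :=
  (∀ j : Fin (2^κ), ¬(i*2^d ≤ (j:ℕ) ∧ (j:ℕ) < (i+1)*2^d) → x j = 0 ∧ y j = 0) ∧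
  (∀ j : Fin (2^κ), s j = false → y j = x j) ∧
  (∀ e, 1 ≤ e → e < d → ∀ i', i*2^(d-e) ≤ i' → i' < (i+1)*2^(d-e) →
      bsum κ x e i' ∈ intRange ((m:ℝ)*p^e) ∧
      (aff κ s e i' = true → bsum κ y e i' ∈ intRange ((m:ℝ)*p^e))) ∧
  bsum κ x d i = t1 ∧ bsum κ y d i = t2

def SolT (κ : ℕ) (s : Fin (2^κ) → Bool) (m : ℕ) (p : ℝ) (d i : ℕ) (t1 t2 : ℤ) :=
  {xy : (Fin (2^κ) → ↥(intRange (m:ℝ))) × (Fin (2^κ) → ↥(intRange (m:ℝ))) //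
    SolP κ s m p d i t1 t2 (fun j => (xy.1 j : ℤ)) (fun j => (xy.2 j : ℤ))}

instance (κ : ℕ) (s : Fin (2^κ) → Bool) (m : ℕ) (p : ℝ) (d i : ℕ) (t1 t2 : ℤ) :
    Finite (SolT κ s m p d i t1 t2) := by
  unfold SolT; infer_instance

lemma point_val (κ : ℕ) (x : Fin (2^κ) → ℤ) (i : ℕ) (hik : i < 2^κ) :
    bsum κ x 0 i = x ⟨i, hik⟩ := by
  unfold bsum
  rw [Finset.sum_eq_single ⟨i, hik⟩]
  · rw [if_pos (by simp)]
  · intro b _ hb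
    rw [if_neg]
    simp only [pow_zero, mul_one, not_and, not_lt]
    intro h1
    have : (b:ℕ) ≠ i := fun h => hb (Fin.ext h)
    omega
  · simp

lemma sol_card_zero (κ : ℕ) (s : Fin (2^κ) → Bool) (m : ℕ) (p : ℝ) (i : ℕ)
    (hik : i < 2^κ) (t1 t2 : ℤ) : Nat.card (SolT κ s m p 0 i t1 t2) ≤ 1 := by
  have hdet : ∀ (z : SolT κ s m p 0 i t1 t2) (j : Fin (2^κ)),
      (z.val.1 j : ℤ) = (if j = ⟨i, hik⟩ then t1 else 0) ∧
      (z.val.2 j : ℤ) = (if j = ⟨i, hik⟩ then t2 else 0) := by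
    intro z j
    by_cases hj : j = ⟨i, hik⟩
    · subst hj
      have h1 := z.prop.2.2.2.1
      have h2 := z.prop.2.2.2.2
      rw [point_val κ _ i hik] at h1 h2
      rw [if_pos rfl, if_pos rfl]
      exact ⟨h1, h2⟩
    · rw [if_neg hj, if_neg hj]
      refine z.prop.1 j ?_
      simp only [pow_zero, mul_one, not_and, not_lt]
      intro h1
      have : (j:ℕ) ≠ i := fun h => hj (Fin.ext h)
      omega
  haveI : Subsingleton (SolT κ s m p 0 i t1 t2) := by
    constructor
    intro z z'
    apply Subtype.ext
    apply Prod.ext <;> funext j <;> apply Subtype.ext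
    · rw [(hdet z j).1, (hdet z' j).1]
    · rw [(hdet z j).2, (hdet z' j).2]
  exact nat_card_le_one

end KTB

namespace KTB

variable {κ : ℕ} {s : Fin (2^κ) → Bool} {m : ℕ} {p : ℝ}

/-- restrict an `R`-valued vector to a block, zero outside -/
noncomputable def mask (κ m : ℕ) (v : Fin (2^κ) → ↥(intRange (m:ℝ))) (d i : ℕ) :
    Fin (2^κ) → ↥(intRange (m:ℝ)) := fun j =>
  if i*2^d ≤ (j:ℕ) ∧ (j:ℕ) < (i+1)*2^d then v j
  else ⟨0, zero_mem_intRange (by positivity)⟩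

lemma coe_mask (v : Fin (2^κ) → ↥(intRange (m:ℝ))) (d i : ℕ) (j : Fin (2^κ)) :
    ((mask κ m v d i j : ℤ)) =
      if i*2^d ≤ (j:ℕ) ∧ (j:ℕ) < (i+1)*2^d then (v j : ℤ) else 0 := by
  unfold mask
  exact apply_ite (fun r : ↥(intRange (m:ℝ)) => (r : ℤ)) _ _ _

lemma bsum_mask_coe (v : Fin (2^κ) → ↥(intRange (m:ℝ))) {d i e i' : ℕ}
    (h : ∀ j, i'*2^e ≤ j ∧ j < (i'+1)*2^e → i*2^d ≤ j ∧ j < (i+1)*2^d) :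
    bsum κ (fun j => (mask κ m v d i j : ℤ)) e i' = bsum κ (fun j => (v j : ℤ)) e i' := by
  have := bsum_mask (κ := κ) (fun j => (v j : ℤ)) (d := d) (i := i) (e := e) (i' := i') h
  rw [← this]
  unfold bsum
  refine Finset.sum_congr rfl fun j _ => ?_
  beta_reduce
  rw [coe_mask]

lemma bsum_eq_of_unaff {x y : Fin (2^κ) → ℤ} {d c : ℕ} (haff : aff κ s d c = false)
    (h2 : ∀ j, s j = false → y j = x j) : bsum κ y d c = bsum κ x d c := by
  refine Finset.sum_congr rfl fun j _ => ?_
  by_cases hj : c*2^d ≤ (j:ℕ) ∧ (j:ℕ) < (c+1)*2^d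
  · rw [if_pos hj, if_pos hj]
    have hsb : sb κ s (j:ℕ) ≠ true := by
      intro hsb
      have : aff κ s d c = true := (aff_iff κ s d c).mpr ⟨(j:ℕ), hj, hsb⟩
      rw [haff] at this; exact Bool.false_ne_true this
    have : sb κ s (j:ℕ) = s j := dif_pos j.isLt
    exact h2 j (by rw [← this]; exact Bool.not_eq_true _ ▸ (Bool.eq_false_iff.mpr hsb))
  · rw [if_neg hj, if_neg hj]

/-- the restriction of a solution at `(d+1, i)` to a child block `c` is a solution with
the block sums as targets. -/
lemma child_sol {d i : ℕ} {t1 t2 : ℤ} (z : SolT κ s m p (d+1) i t1 t2)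
    {c : ℕ} (hc : c = 2*i ∨ c = 2*i+1) :
    SolP κ s m p d c (bsum κ (fun j => (z.val.1 j : ℤ)) d c)
      (bsum κ (fun j => (z.val.2 j : ℤ)) d c)
      (fun j => (mask κ m z.val.1 d c j : ℤ)) (fun j => (mask κ m z.val.2 d c j : ℤ)) := by
  refine ⟨?_, ?_, ?_, ?_, ?_⟩
  · intro j hj
    constructor <;> · beta_reduce; rw [coe_mask, if_neg hj]
  · intro j hsj
    beta_reduce
    rw [coe_mask, coe_mask]
    by_cases hj : c*2^d ≤ (j:ℕ) ∧ (j:ℕ) < (c+1)*2^d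
    · rw [if_pos hj, if_pos hj]; exact z.prop.2.1 j hsj
    · rw [if_neg hj, if_neg hj]
  · intro e he1 he2 i' hi'1 hi'2
    have hed : e ≤ d := by omega
    have hsub : ∀ j, i'*2^e ≤ j ∧ j < (i'+1)*2^e → c*2^d ≤ j ∧ j < (c+1)*2^d :=
      blk_sub hed hi'1 hi'2
    rw [bsum_mask_coe _ hsub, bsum_mask_coe _ hsub]
    have hpow : 2^(d+1-e) = 2^(d-e)*2 := by rw [← pow_succ]; congr 1; omega
    refine z.prop.2.2.1 e he1 (by omega) i' ?_ ?_
    · calc i*2^(d+1-e) = (2*i)*2^(d-e) := by rw [hpow]; ring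
        _ ≤ c*2^(d-e) := Nat.mul_le_mul_right _ (by omega)
        _ ≤ i' := hi'1
    · calc i' < (c+1)*2^(d-e) := hi'2
        _ ≤ ((i+1)*2)*2^(d-e) := Nat.mul_le_mul_right _ (by omega)
        _ = (i+1)*2^(d+1-e) := by rw [hpow]; ring
  · exact bsum_mask_coe _ (fun j h => h)
  · exact bsum_mask_coe _ (fun j h => h)

lemma left_mem_x {d i : ℕ} {t1 t2 : ℤ}
    (z : SolT κ s m p (d+1) i t1 t2) (hi : (i+1)*2^(d+1) ≤ 2^κ) :
    bsum κ (fun j => (z.val.1 j : ℤ)) d (2*i) ∈ intRange ((m:ℝ)*p^d) := by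
  cases d with
  | zero =>
    have h2i : 2*i < 2^κ := by
      have : (i+1)*2^(0+1) = 2*i+2 := by ring
      omega
    rw [pow_zero, mul_one, point_val κ _ (2*i) h2i]
    exact (z.val.1 ⟨2*i, h2i⟩).2
  | succ e =>
    exact (z.prop.2.2.1 (e+1) (by omega) (by omega) (2*i)
      (by have h1 : (e+1+1)-(e+1) = 1 := by omega
          rw [h1, pow_one]; omega)
      (by have h1 : (e+1+1)-(e+1) = 1 := by omega
          rw [h1, pow_one]; omega)).1

lemma left_mem_y {d i : ℕ} {t1 t2 : ℤ}
    (z : SolT κ s m p (d+1) i t1 t2) (hi : (i+1)*2^(d+1) ≤ 2^κ)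
    (haff : aff κ s d (2*i) = true) :
    bsum κ (fun j => (z.val.2 j : ℤ)) d (2*i) ∈ intRange ((m:ℝ)*p^d) := by
  cases d with
  | zero =>
    have h2i : 2*i < 2^κ := by
      have : (i+1)*2^(0+1) = 2*i+2 := by ring
      omega
    rw [pow_zero, mul_one, point_val κ _ (2*i) h2i]
    exact (z.val.2 ⟨2*i, h2i⟩).2
  | succ e =>
    exact (z.prop.2.2.1 (e+1) (by omega) (by omega) (2*i)
      (by have h1 : (e+1+1)-(e+1) = 1 := by omega
          rw [h1, pow_one]; omega)
      (by have h1 : (e+1+1)-(e+1) = 1 := by omega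
          rw [h1, pow_one]; omega)).2 haff

end KTB

namespace KTB

variable {κ : ℕ} {s : Fin (2^κ) → Bool} {m : ℕ} {p : ℝ}

noncomputable def recon (κ m : ℕ) (d i : ℕ) (a b : Fin (2^κ) → ↥(intRange (m:ℝ))) :
    Fin (2^κ) → ↥(intRange (m:ℝ)) := fun j =>
  if (2*i)*2^d ≤ (j:ℕ) ∧ (j:ℕ) < (2*i+1)*2^d then a j else b j

lemma recon_mask {d i : ℕ} (v : Fin (2^κ) → ↥(intRange (m:ℝ)))
    (hv : ∀ j : Fin (2^κ), ¬(i*2^(d+1) ≤ (j:ℕ) ∧ (j:ℕ) < (i+1)*2^(d+1)) → (v j : ℤ) = 0) :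
    recon κ m d i (mask κ m v d (2*i)) (mask κ m v d (2*i+1)) = v := by
  funext j
  unfold recon mask
  by_cases hL : (2*i)*2^d ≤ (j:ℕ) ∧ (j:ℕ) < (2*i+1)*2^d
  · rw [if_pos hL, if_pos hL]
  · rw [if_neg hL]
    by_cases hR : (2*i+1)*2^d ≤ (j:ℕ) ∧ (j:ℕ) < (2*i+1+1)*2^d
    · rw [if_pos hR]
    · rw [if_neg hR]
      refine Subtype.ext ?_
      have hout : ¬(i*2^(d+1) ≤ (j:ℕ) ∧ (j:ℕ) < (i+1)*2^(d+1)) := by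
        intro hin
        have hk : (2*i+1+1)*2^d = (2*i+2)*2^d := by ring
        rcases (blk_split d i (j:ℕ)).mp hin with h | h
        · exact hL h
        · exact hR (by constructor <;> omega)
      exact (hv j hout).symm

lemma sol_card_step_single {d i : ℕ} (hi : (i+1)*2^(d+1) ≤ 2^κ) (t1 t2 : ℤ)
    (g : ℤ → ℤ)
    (hg : ∀ z : SolT κ s m p (d+1) i t1 t2,
      bsum κ (fun j => (z.val.2 j : ℤ)) d (2*i)
        = g (bsum κ (fun j => (z.val.1 j : ℤ)) d (2*i)))
    (IH : ∀ (i' : ℕ) (t1' t2' : ℤ), (i'+1)*2^d ≤ 2^κ →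
        Nat.card (SolT κ s m p d i' t1' t2') ≤ bnd κ s m p d i') :
    Nat.card (SolT κ s m p (d+1) i t1 t2)
      ≤ Wc m p d * bnd κ s m p d (2*i) * bnd κ s m p d (2*i+1) := by
  classical
  have hiL : (2*i+1)*2^d ≤ 2^κ := by
    have h0 : (i+1)*2^(d+1) = (2*i+2)*2^d := by ring
    have h1 : (2*i+1)*2^d ≤ (2*i+2)*2^d := Nat.mul_le_mul_right _ (by omega)
    omega
  have hiR : (2*i+1+1)*2^d ≤ 2^κ := by
    have h0 : (i+1)*2^(d+1) = (2*i+1+1)*2^d := by ring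
    omega
  let W := intRange ((m:ℝ)*p^d)
  let T : ↥W → Type _ := fun u =>
    SolT κ s m p d (2*i) u (g u) × SolT κ s m p d (2*i+1) (t1 - u) (t2 - g u)
  let F : SolT κ s m p (d+1) i t1 t2 → Σ u : ↥W, T u := fun z =>
    ⟨⟨bsum κ (fun j => (z.val.1 j : ℤ)) d (2*i), left_mem_x z hi⟩,
     (⟨(mask κ m z.val.1 d (2*i), mask κ m z.val.2 d (2*i)), by
        have h := child_sol z (Or.inl rfl)
        rwa [hg z] at h⟩,
      ⟨(mask κ m z.val.1 d (2*i+1), mask κ m z.val.2 d (2*i+1)), by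
        have h := child_sol z (Or.inr rfl)
        have e1 : bsum κ (fun j => (z.val.1 j : ℤ)) d (2*i+1)
            = t1 - bsum κ (fun j => (z.val.1 j : ℤ)) d (2*i) := by
          have hsp := bsum_split (κ := κ) (fun j => (z.val.1 j : ℤ)) d i
          have ht := z.prop.2.2.2.1
          omega
        have e2 : bsum κ (fun j => (z.val.2 j : ℤ)) d (2*i+1)
            = t2 - g (bsum κ (fun j => (z.val.1 j : ℤ)) d (2*i)) := by
          have hsp := bsum_split (κ := κ) (fun j => (z.val.2 j : ℤ)) d i
          have ht := z.prop.2.2.2.2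
          have hgz := hg z
          omega
        rw [e1, e2] at h
        exact h⟩)⟩
  let G : (Σ u : ↥W, T u) → _ := fun w =>
    (recon κ m d i w.2.1.val.1 w.2.2.val.1, recon κ m d i w.2.1.val.2 w.2.2.val.2)
  have hGF : ∀ z, G (F z) = z.val := by
    intro z
    refine Prod.ext ?_ ?_
    · exact recon_mask z.val.1 (fun j hj => (z.prop.1 j hj).1)
    · exact recon_mask z.val.2 (fun j hj => (z.prop.1 j hj).2)
  have hFinj : Function.Injective F := by
    intro z z' h
    apply Subtype.ext
    rw [← hGF z, ← hGF z', h]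
  have key := Nat.card_le_card_of_injective F hFinj
  refine le_trans key (le_trans
    (nat_card_sigma_le (bnd κ s m p d (2*i) * bnd κ s m p d (2*i+1)) ?_) ?_)
  · intro u
    rw [Nat.card_prod]
    exact Nat.mul_le_mul (IH _ _ _ hiL) (IH _ _ _ hiR)
  · rw [Fintype.card_coe]
    exact le_of_eq (mul_assoc _ _ _).symm

lemma sol_card_step_both {d i : ℕ} (hi : (i+1)*2^(d+1) ≤ 2^κ) (t1 t2 : ℤ)
    (haL : aff κ s d (2*i) = true)
    (IH : ∀ (i' : ℕ) (t1' t2' : ℤ), (i'+1)*2^d ≤ 2^κ →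
        Nat.card (SolT κ s m p d i' t1' t2') ≤ bnd κ s m p d i') :
    Nat.card (SolT κ s m p (d+1) i t1 t2)
      ≤ Wc m p d * Wc m p d * bnd κ s m p d (2*i) * bnd κ s m p d (2*i+1) := by
  classical
  have hiL : (2*i+1)*2^d ≤ 2^κ := by
    have h0 : (i+1)*2^(d+1) = (2*i+2)*2^d := by ring
    have h1 : (2*i+1)*2^d ≤ (2*i+2)*2^d := Nat.mul_le_mul_right _ (by omega)
    omega
  have hiR : (2*i+1+1)*2^d ≤ 2^κ := by
    have h0 : (i+1)*2^(d+1) = (2*i+1+1)*2^d := by ring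
    omega
  let W := intRange ((m:ℝ)*p^d)
  let T : ↥W × ↥W → Type _ := fun u =>
    SolT κ s m p d (2*i) u.1 u.2 × SolT κ s m p d (2*i+1) (t1 - u.1) (t2 - u.2)
  let F : SolT κ s m p (d+1) i t1 t2 → Σ u : ↥W × ↥W, T u := fun z =>
    ⟨(⟨bsum κ (fun j => (z.val.1 j : ℤ)) d (2*i), left_mem_x z hi⟩,
      ⟨bsum κ (fun j => (z.val.2 j : ℤ)) d (2*i), left_mem_y z hi haL⟩),
     (⟨(mask κ m z.val.1 d (2*i), mask κ m z.val.2 d (2*i)), by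
        exact child_sol z (Or.inl rfl)⟩,
      ⟨(mask κ m z.val.1 d (2*i+1), mask κ m z.val.2 d (2*i+1)), by
        have h := child_sol z (Or.inr rfl)
        have e1 : bsum κ (fun j => (z.val.1 j : ℤ)) d (2*i+1)
            = t1 - bsum κ (fun j => (z.val.1 j : ℤ)) d (2*i) := by
          have hsp := bsum_split (κ := κ) (fun j => (z.val.1 j : ℤ)) d i
          have ht := z.prop.2.2.2.1
          omega
        have e2 : bsum κ (fun j => (z.val.2 j : ℤ)) d (2*i+1)
            = t2 - bsum κ (fun j => (z.val.2 j : ℤ)) d (2*i) := by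
          have hsp := bsum_split (κ := κ) (fun j => (z.val.2 j : ℤ)) d i
          have ht := z.prop.2.2.2.2
          omega
        rw [e1, e2] at h
        exact h⟩)⟩
  let G : (Σ u : ↥W × ↥W, T u) → _ := fun w =>
    (recon κ m d i w.2.1.val.1 w.2.2.val.1, recon κ m d i w.2.1.val.2 w.2.2.val.2)
  have hGF : ∀ z, G (F z) = z.val := by
    intro z
    refine Prod.ext ?_ ?_
    · exact recon_mask z.val.1 (fun j hj => (z.prop.1 j hj).1)
    · exact recon_mask z.val.2 (fun j hj => (z.prop.1 j hj).2)
  have hFinj : Function.Injective F := by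
    intro z z' h
    apply Subtype.ext
    rw [← hGF z, ← hGF z', h]
  have key := Nat.card_le_card_of_injective F hFinj
  refine le_trans key (le_trans
    (nat_card_sigma_le (bnd κ s m p d (2*i) * bnd κ s m p d (2*i+1)) ?_) ?_)
  · intro u
    rw [Nat.card_prod]
    exact Nat.mul_le_mul (IH _ _ _ hiL) (IH _ _ _ hiR)
  · rw [Fintype.card_prod, Fintype.card_coe]
    exact le_of_eq (mul_assoc _ _ _).symm

lemma sol_card_le : ∀ (d i : ℕ) (t1 t2 : ℤ), (i+1)*2^d ≤ 2^κ →
    Nat.card (SolT κ s m p d i t1 t2) ≤ bnd κ s m p d i := by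
  intro d
  induction d with
  | zero =>
    intro i t1 t2 hi
    have hik : i < 2^κ := by simp only [pow_zero, mul_one] at hi; omega
    simpa [bnd] using sol_card_zero κ s m p i hik t1 t2
  | succ d IH =>
    intro i t1 t2 hi
    cases haR : aff κ s d (2*i+1) with
    | false =>
      have hb : (aff κ s d (2*i) && aff κ s d (2*i+1)) = false := by
        rw [haR, Bool.and_false]
      have hg : ∀ z : SolT κ s m p (d+1) i t1 t2,
          bsum κ (fun j => (z.val.2 j : ℤ)) d (2*i)
            = t2 - t1 + bsum κ (fun j => (z.val.1 j : ℤ)) d (2*i) := by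
        intro z
        have hx := bsum_split (κ := κ) (fun j => (z.val.1 j : ℤ)) d i
        have hy := bsum_split (κ := κ) (fun j => (z.val.2 j : ℤ)) d i
        have ht1 := z.prop.2.2.2.1
        have ht2 := z.prop.2.2.2.2
        have hr := bsum_eq_of_unaff (x := fun j => (z.val.1 j : ℤ))
          (y := fun j => (z.val.2 j : ℤ)) (d := d) (c := 2*i+1) haR z.prop.2.1
        omega
      have hstep := sol_card_step_single hi t1 t2 (fun u => t2 - t1 + u) hg IH
      simpa [bnd, hb] using hstep
    | true =>
      cases haL : aff κ s d (2*i) with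
      | false =>
        have hb : (aff κ s d (2*i) && aff κ s d (2*i+1)) = false := by
          rw [haL, Bool.false_and]
        have hg : ∀ z : SolT κ s m p (d+1) i t1 t2,
            bsum κ (fun j => (z.val.2 j : ℤ)) d (2*i)
              = id (bsum κ (fun j => (z.val.1 j : ℤ)) d (2*i)) := by
          intro z
          exact bsum_eq_of_unaff (d := d) (c := 2*i) haL z.prop.2.1
        have hstep := sol_card_step_single hi t1 t2 id hg IH
        simpa [bnd, hb] using hstep
      | true =>
        have hb : (aff κ s d (2*i) && aff κ s d (2*i+1)) = true := by
          rw [haL, haR, Bool.and_self]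
        have hstep := sol_card_step_both hi t1 t2 haL IH
        simpa [bnd, hb] using hstep

end KTB

namespace KTB

lemma floor_nat_half (m : ℕ) : ⌊(m:ℝ)/2⌋ = (m:ℤ)/2 := by
  have h1 : ((m:ℝ))/2 = (((m:ℚ)/2 : ℚ) : ℝ) := by push_cast; ring
  rw [h1, Rat.floor_cast]
  have h2 : ((m:ℚ)) = ((m:ℤ):ℚ) := by push_cast; ring
  have h3 : ((2:ℚ)) = ((2:ℕ):ℚ) := by norm_num
  rw [h2, h3]
  exact Rat.floor_intCast_div_natCast (m:ℤ) 2

lemma intRange_card_le {r : ℝ} (hr : 0 ≤ r) : ((intRange r).card : ℝ) ≤ r + 1 := by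
  have h0 : (0:ℤ) ≤ ⌊r/2⌋ := Int.floor_nonneg.mpr (by positivity)
  have h1 : (⌊r/2⌋ + 1 - -⌊r/2⌋) = 2*⌊r/2⌋ + 1 := by ring
  have h2 : (0:ℤ) ≤ 2*⌊r/2⌋ + 1 := by omega
  calc ((intRange r).card : ℝ) = ((2*⌊r/2⌋+1 : ℤ) : ℝ) := by
        rw [intRange, Int.card_Icc, h1, ← Int.cast_natCast, Int.toNat_of_nonneg h2]
    _ ≤ r + 1 := by
        push_cast
        have := Int.floor_le (r/2)
        linarith

lemma intRange_card_ge (m : ℕ) : m ≤ (intRange (m:ℝ)).card := by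
  rw [intRange, Int.card_Icc, floor_nat_half]
  omega

lemma prod4_le {a1 a2 a3 a4 b1 b2 b3 b4 : ℝ} (h1 : a1 ≤ b1) (h2 : a2 ≤ b2)
    (h3 : a3 ≤ b3) (h4 : a4 ≤ b4) (n1 : 0 ≤ a1) (n2 : 0 ≤ a2) (n3 : 0 ≤ a3) (n4 : 0 ≤ a4) :
    a1*a2*a3*a4 ≤ b1*b2*b3*b4 := by
  have hb1 := n1.trans h1
  have hb2 := n2.trans h2
  have hb3 := n3.trans h3
  exact mul_le_mul (mul_le_mul (mul_le_mul h1 h2 n2 hb1) h3 n3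
    (mul_nonneg hb1 hb2)) h4 n4 (mul_nonneg (mul_nonneg hb1 hb2) hb3)

variable {κ : ℕ} {s : Fin (2^κ) → Bool} {m : ℕ} {p : ℝ}

lemma bnd_le_real (c : ℝ) (hm0 : (0:ℝ) < m) (hp0 : 0 < p) (hc : 0 < c)
    (hWc : ∀ e, e < κ → (Wc m p e : ℝ) ≤ c * (m:ℝ) * p^e) :
    ∀ d, d ≤ κ → ∀ i, (bnd κ s m p d i : ℝ)
      ≤ (c*(m:ℝ))^(Aexp κ s d i) * p^(Pexp κ s d i) := by
  intro d
  induction d with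
  | zero => intro _ i; simp [bnd, Aexp, Pexp]
  | succ d IH =>
    intro hd i
    have hdκ : d ≤ κ := by omega
    have hIL := IH hdκ (2*i)
    have hIR := IH hdκ (2*i+1)
    have hW := hWc d (by omega)
    have hcm : (0:ℝ) < c * m * p^d := by positivity
    cases hb : (aff κ s d (2*i) && aff κ s d (2*i+1)) with
    | true =>
      have : (bnd κ s m p (d+1) i : ℝ)
          = (Wc m p d : ℝ) * (Wc m p d : ℝ) * (bnd κ s m p d (2*i) : ℝ)
            * (bnd κ s m p d (2*i+1) : ℝ) := by
        rw [bnd, hb]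
        push_cast
        rw [if_pos (by trivial)]
      rw [this]
      calc (Wc m p d : ℝ) * (Wc m p d : ℝ) * (bnd κ s m p d (2*i) : ℝ)
            * (bnd κ s m p d (2*i+1) : ℝ)
          ≤ (c*m*p^d) * (c*m*p^d) * ((c*(m:ℝ))^(Aexp κ s d (2*i)) * p^(Pexp κ s d (2*i)))
            * ((c*(m:ℝ))^(Aexp κ s d (2*i+1)) * p^(Pexp κ s d (2*i+1))) :=
            prod4_le hW hW hIL hIR (by positivity) (by positivity) (by positivity) (by positivity)
        _ = (c*(m:ℝ))^(Aexp κ s (d+1) i) * p^(Pexp κ s (d+1) i) := by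
            rw [Aexp, Pexp, hb]
            simp only [if_true]
            ring
    | false =>
      have : (bnd κ s m p (d+1) i : ℝ)
          = (Wc m p d : ℝ) * 1 * (bnd κ s m p d (2*i) : ℝ)
            * (bnd κ s m p d (2*i+1) : ℝ) := by
        rw [bnd, hb]
        push_cast
        rfl
      rw [this]
      calc (Wc m p d : ℝ) * 1 * (bnd κ s m p d (2*i) : ℝ) * (bnd κ s m p d (2*i+1) : ℝ)
          ≤ (c*m*p^d) * 1 * ((c*(m:ℝ))^(Aexp κ s d (2*i)) * p^(Pexp κ s d (2*i)))
            * ((c*(m:ℝ))^(Aexp κ s d (2*i+1)) * p^(Pexp κ s d (2*i+1))) :=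
            prod4_le hW le_rfl hIL hIR (by positivity) (by norm_num) (by positivity) (by positivity)
        _ = (c*(m:ℝ))^(Aexp κ s (d+1) i) * p^(Pexp κ s (d+1) i) := by
            rw [Aexp, Pexp, hb]
            simp only [if_false, Bool.false_eq_true]
            ring

lemma Aexp_closed : ∀ d i, Aexp κ s d i + 1 + (if aff κ s d i = true then 1 else 0)
    = 2^d + wt κ s d i := by
  intro d
  induction d with
  | zero => intro i; cases h : sb κ s i <;> simp [Aexp, wt, aff, h]
  | succ d ih =>
    intro i
    have ihL := ih (2*i)
    have ihR := ih (2*i+1)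
    rw [Aexp, wt, aff, pow_succ]
    cases haL : aff κ s d (2*i) <;> cases haR : aff κ s d (2*i+1) <;>
      simp only [haL, haR] at ihL ihR ⊢ <;> simp_all <;> omega

lemma Pexp_closed : ∀ d i, Pexp κ s d i + d * (if aff κ s d i = true then 1 else 0) + d + 1
    = 2^d + sg κ s d i := by
  intro d
  induction d with
  | zero => intro i; simp [Pexp, sg]
  | succ d ih =>
    intro i
    have ihL := ih (2*i)
    have ihR := ih (2*i+1)
    rw [Pexp, sg, aff, pow_succ]
    cases haL : aff κ s d (2*i) <;> cases haR : aff κ s d (2*i+1) <;>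
      simp only [haL, haR] at ihL ihR ⊢ <;> simp_all <;> omega

lemma wt_le_sg : ∀ d i, wt κ s d i ≤ sg κ s d i + (if aff κ s d i = true then 1 else 0) := by
  intro d
  induction d with
  | zero => intro i; cases h : sb κ s i <;> simp [wt, sg, aff, h]
  | succ d ih =>
    intro i
    have ihL := ih (2*i)
    have ihR := ih (2*i+1)
    rw [wt, sg, aff]
    cases haL : aff κ s d (2*i) <;> cases haR : aff κ s d (2*i+1) <;>
      simp only [haL, haR] at ihL ihR ⊢ <;> simp_all <;> omega

lemma le_sg : ∀ d i, aff κ s d i = true → d ≤ sg κ s d i := by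
  intro d
  induction d with
  | zero => intro i _; omega
  | succ d ih =>
    intro i ha
    rw [aff] at ha
    rw [sg, aff]
    rcases Bool.or_eq_true_iff.mp ha with h | h
    · have := ih (2*i) h
      simp only [h, Bool.true_or, cond_true]
      omega
    · have := ih (2*i+1) h
      simp only [h, Bool.or_true, cond_true]
      omega

end KTB

namespace KTB

variable {κ : ℕ} {s : Fin (2^κ) → Bool}

lemma cond_one {b : Bool} : (cond b 1 0 : ℕ) = (if b = true then 1 else 0) := by
  cases b <;> simp

lemma wt_sum : ∀ d i, wt κ s d i
    = ∑ j ∈ Finset.Ico (i*2^d) ((i+1)*2^d), (if sb κ s j = true then 1 else 0) := by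
  intro d
  induction d with
  | zero =>
    intro i
    have h : Finset.Ico (i*2^0) ((i+1)*2^0) = {i} := by
      ext j
      simp only [Finset.mem_Ico, Finset.mem_singleton, pow_zero, mul_one]
      omega
    rw [h, Finset.sum_singleton, wt]
    cases hsb : sb κ s i <;> simp [hsb]
  | succ d ih =>
    intro i
    have e1 : i*2^(d+1) = (2*i)*2^d := by ring
    have e2 : (i+1)*2^(d+1) = (2*i+1+1)*2^d := by ring
    have e3 : (2*i+1)*2^d = (2*i)*2^d + 2^d := by ring
    have hA : (2*i)*2^d ≤ (2*i+1)*2^d := Nat.mul_le_mul_right _ (by omega)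
    have hB : (2*i+1)*2^d ≤ (2*i+1+1)*2^d := Nat.mul_le_mul_right _ (by omega)
    rw [wt, ih (2*i), ih (2*i+1), e1, e2,
      Finset.sum_Ico_consecutive _ hA hB]

lemma sg_sum : ∀ d i, sg κ s d i
    = ∑ e ∈ Finset.Icc 1 d, ∑ i' ∈ Finset.Ico (i*2^(d-e)) ((i+1)*2^(d-e)),
        (if aff κ s e i' = true then 1 else 0) := by
  intro d
  induction d with
  | zero => intro i; simp [sg]
  | succ d ih =>
    intro i
    rw [sg, ih (2*i), ih (2*i+1), cond_one]
    have htop : ∑ i' ∈ Finset.Ico (i*2^(d+1-(d+1))) ((i+1)*2^(d+1-(d+1))),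
        (if aff κ s (d+1) i' = true then 1 else 0)
        = (if aff κ s (d+1) i = true then 1 else 0) := by
      have h0 : d+1-(d+1) = 0 := by omega
      have h : Finset.Ico (i*2^(d+1-(d+1))) ((i+1)*2^(d+1-(d+1))) = {i} := by
        rw [h0]; ext j
        simp only [Finset.mem_Ico, Finset.mem_singleton, pow_zero, mul_one]
        omega
      rw [h, Finset.sum_singleton]
    have hmain : ∀ e ∈ Finset.Icc 1 d,
        (∑ i' ∈ Finset.Ico ((2*i)*2^(d-e)) ((2*i+1)*2^(d-e)),
          (if aff κ s e i' = true then 1 else 0))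
        + (∑ i' ∈ Finset.Ico ((2*i+1)*2^(d-e)) ((2*i+1+1)*2^(d-e)),
          (if aff κ s e i' = true then 1 else 0))
        = ∑ i' ∈ Finset.Ico (i*2^(d+1-e)) ((i+1)*2^(d+1-e)),
          (if aff κ s e i' = true then 1 else 0) := by
      intro e he
      rw [Finset.mem_Icc] at he
      have hq : 2^(d+1-e) = 2^(d-e)*2 := by rw [← pow_succ]; congr 1; omega
      have e1 : i*2^(d+1-e) = (2*i)*2^(d-e) := by rw [hq]; ring
      have e2 : (i+1)*2^(d+1-e) = (2*i+1+1)*2^(d-e) := by rw [hq]; ring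
      have e3 : (2*i+1)*2^(d-e) = (2*i)*2^(d-e) + 2^(d-e) := by ring
      have hA : (2*i)*2^(d-e) ≤ (2*i+1)*2^(d-e) := Nat.mul_le_mul_right _ (by omega)
      have hB : (2*i+1)*2^(d-e) ≤ (2*i+1+1)*2^(d-e) := Nat.mul_le_mul_right _ (by omega)
      rw [e1, e2, Finset.sum_Ico_consecutive _ hA hB]
    have h1d : 1 ≤ d + 1 := by omega
    rw [Finset.sum_Icc_succ_top h1d, htop,
      ← Finset.sum_add_distrib, Finset.sum_congr rfl hmain]

lemma sg_eq_stex : sg κ s κ 0 = stex κ s := by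
  rw [sg_sum, stex]
  refine Finset.sum_congr rfl fun e he => ?_
  rw [Finset.mem_Icc] at he
  have h : Finset.Ico (0*2^(κ-e)) ((0+1)*2^(κ-e)) = Finset.range (2^(κ-e)) := by
    rw [Finset.range_eq_Ico]; congr 1 <;> ring
  rw [h]
  refine Finset.sum_congr rfl fun i _ => ?_
  congr 1
  have : (aff κ s e i = true) ↔ (∃ j : Fin (2^κ), i*2^e ≤ (j:ℕ) ∧ (j:ℕ) < (i+1)*2^e ∧ s j = true) := by
    rw [aff_iff]
    constructor
    · rintro ⟨j, ⟨h1, h2⟩, h3⟩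
      have hj : j < 2^κ := by
        by_contra hj
        rw [sb, dif_neg hj] at h3
        exact Bool.false_ne_true h3
      refine ⟨⟨j, hj⟩, h1, h2, ?_⟩
      rwa [sb, dif_pos hj] at h3
    · rintro ⟨j, h1, h2, h3⟩
      exact ⟨(j:ℕ), ⟨h1, h2⟩, by rwa [sb, dif_pos j.isLt]⟩
  simp only [this]

lemma wt_global : wt κ s κ 0 = ∑ j : Fin (2^κ), (if s j = true then 1 else 0) := by
  rw [wt_sum]
  have h1 : (0:ℕ)*2^κ = 0 := by ring
  have h2 : (0+1)*2^κ = 2^κ := by ring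
  rw [h1, h2, ← Finset.range_eq_Ico, ← Fin.sum_univ_eq_sum_range
    (fun j => if sb κ s j = true then 1 else 0) (2^κ)]
  refine Finset.sum_congr rfl fun j _ => ?_
  rw [sb, dif_pos j.isLt]

lemma aff_root (hs : s ≠ fun _ => false) : aff κ s κ 0 = true := by
  have : ∃ j : Fin (2^κ), s j = true := by
    by_contra h
    push_neg at h
    exact hs (funext fun j => by
      have := h j
      exact Bool.not_eq_true _ ▸ (Bool.eq_false_iff.mpr (by simpa using this)))
  obtain ⟨j, hj⟩ := this
  refine (aff_iff κ s κ 0).mpr ⟨(j:ℕ), ⟨by omega, ?_⟩, by rwa [sb, dif_pos j.isLt]⟩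
  have : (0+1)*2^κ = 2^κ := by ring
  omega

end KTB

namespace KTB

lemma bsum_root (κ : ℕ) (x : Fin (2^κ) → ℤ) : bsum κ x κ 0 = ∑ j, x j := by
  refine Finset.sum_congr rfl fun j _ => ?_
  have h1 : (0:ℕ)*2^κ = 0 := by ring
  have h2 : (0+1)*2^κ = 2^κ := by ring
  have h3 := j.isLt
  rw [if_pos ⟨by omega, by omega⟩]

def Ifree (κ n : ℕ) (ℓ ℓ' : Fin (2^κ) → Fin n) : Finset (Fin (2^κ) × Fin n) :=
  Finset.univ.filter (fun q => q.2 ≠ ℓ q.1 ∧ q.2 ≠ ℓ' q.1)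

lemma top_card_le (κ n m : ℕ) (p : ℝ) (s : Fin (2^κ) → Bool)
    (ℓ ℓ' : Fin (2^κ) → Fin n) (hδ : ∀ i, s i = true ↔ ℓ i ≠ ℓ' i) :
    Nat.card {L : Fin (2 ^ κ) → Fin n → ↥(intRange (m : ℝ)) //
      Successful κ n m p (fun i j => (L i j : ℤ)) ℓ ∧
        Successful κ n m p (fun i j => (L i j : ℤ)) ℓ'}
    ≤ (intRange (m:ℝ)).card ^ (Ifree κ n ℓ ℓ').card * bnd κ s m p κ 0 := by
  classical
  have solpf : ∀ L : {L : Fin (2 ^ κ) → Fin n → ↥(intRange (m : ℝ)) //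
      Successful κ n m p (fun i j => (L i j : ℤ)) ℓ ∧
        Successful κ n m p (fun i j => (L i j : ℤ)) ℓ'},
      SolP κ s m p κ 0 0 0 (fun j => (L.val j (ℓ j) : ℤ)) (fun j => (L.val j (ℓ' j) : ℤ)) := by
    intro L
    have h1 : (0:ℕ)*2^κ = 0 := by ring
    have h2 : (0+1)*2^κ = 2^κ := by ring
    refine ⟨?_, ?_, ?_, ?_, ?_⟩
    · intro j hj
      exfalso
      have h3 := j.isLt
      exact hj ⟨by omega, by omega⟩
    · intro j hsj
      have hll : ℓ j = ℓ' j := by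
        by_contra hne
        rw [(hδ j).mpr hne] at hsj
        exact absurd hsj (by simp)
      beta_reduce
      rw [← hll]
    · intro e he1 he2 i' hi'1 hi'2
      have h3 : (0+1)*2^(κ-e) = 2^(κ-e) := by ring
      have hi'lt : i' < 2^(κ-e) := by omega
      constructor
      · exact L.prop.1.1 e (Finset.mem_Icc.mpr ⟨he1, by omega⟩) i' hi'lt
      · intro _
        exact L.prop.2.1 e (Finset.mem_Icc.mpr ⟨he1, by omega⟩) i' hi'lt
    · rw [bsum_root]
      exact L.prop.1.2
    · rw [bsum_root]
      exact L.prop.2.2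
  let τ := ((↥(Ifree κ n ℓ ℓ') → ↥(intRange (m:ℝ))) × SolT κ s m p κ 0 0 0)
  let F : {L : Fin (2 ^ κ) → Fin n → ↥(intRange (m : ℝ)) //
      Successful κ n m p (fun i j => (L i j : ℤ)) ℓ ∧
        Successful κ n m p (fun i j => (L i j : ℤ)) ℓ'} → τ := fun L =>
    (fun q => L.val q.val.1 q.val.2,
     ⟨(fun j => L.val j (ℓ j), fun j => L.val j (ℓ' j)), solpf L⟩)
  let G : τ → (Fin (2^κ) → Fin n → ↥(intRange (m:ℝ))) := fun w => fun j c =>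
    if hc : c = ℓ j then w.2.val.1 j
    else if hc' : c = ℓ' j then w.2.val.2 j
    else w.1 ⟨(j, c), by
      rw [Ifree, Finset.mem_filter]
      exact ⟨Finset.mem_univ _, hc, hc'⟩⟩
  have hGF : ∀ L, G (F L) = L.val := by
    intro L
    funext j c
    show (if hc : c = ℓ j then L.val j (ℓ j)
      else if hc' : c = ℓ' j then L.val j (ℓ' j) else L.val j c) = L.val j c
    by_cases hc : c = ℓ j
    · rw [dif_pos hc, hc]
    · rw [dif_neg hc]
      by_cases hc' : c = ℓ' j
      · rw [dif_pos hc', hc']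
      · rw [dif_neg hc']
  have hFinj : Function.Injective F := by
    intro L L' h
    apply Subtype.ext
    rw [← hGF L, ← hGF L', h]
  have key := Nat.card_le_card_of_injective F hFinj
  have hτ : Nat.card τ = (intRange (m:ℝ)).card ^ (Ifree κ n ℓ ℓ').card
      * Nat.card (SolT κ s m p κ 0 0 0) := by
    rw [Nat.card_prod]
    congr 1
    rw [Nat.card_eq_fintype_card, Fintype.card_fun, Fintype.card_coe, Fintype.card_coe]
  have hsol := sol_card_le (κ := κ) (s := s) (m := m) (p := p) κ 0 0 0
    (le_of_eq (one_mul _))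
  calc Nat.card _ ≤ Nat.card τ := key
    _ = _ * Nat.card (SolT κ s m p κ 0 0 0) := hτ
    _ ≤ _ := Nat.mul_le_mul_left _ hsol

lemma Ifree_card (κ n : ℕ) (hn : 0 < n) (s : Fin (2^κ) → Bool)
    (ℓ ℓ' : Fin (2^κ) → Fin n) (hδ : ∀ i, s i = true ↔ ℓ i ≠ ℓ' i) :
    (Ifree κ n ℓ ℓ').card + (2^κ + wt κ s κ 0) = 2^κ * n := by
  classical
  have hpair : ∀ j : Fin (2^κ), ({ℓ j, ℓ' j} : Finset (Fin n)).card
      = if s j = true then 2 else 1 := by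
    intro j
    by_cases hsj : s j = true
    · rw [if_pos hsj, Finset.card_pair ((hδ j).mp hsj)]
    · have hll : ℓ j = ℓ' j := by
        by_contra hne
        exact hsj ((hδ j).mpr hne)
      rw [if_neg hsj, hll, Finset.pair_eq_singleton, Finset.card_singleton]
  have hle : ∀ j : Fin (2^κ), (if s j = true then 2 else 1) ≤ n := by
    intro j
    by_cases hsj : s j = true
    · rw [if_pos hsj]
      have hne := (hδ j).mp hsj
      have h1 := (ℓ j).isLt
      have h2 := (ℓ' j).isLt
      have h3 : ((ℓ j):ℕ) ≠ ((ℓ' j):ℕ) := fun h => hne (Fin.ext h)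
      omega
    · rw [if_neg hsj]; omega
  have hfib : (Ifree κ n ℓ ℓ').card
      = ∑ j : Fin (2^κ), (n - (if s j = true then 2 else 1)) := by
    rw [Finset.card_eq_sum_card_fiberwise
      (f := Prod.fst) (t := Finset.univ) (fun x _ => Finset.mem_univ _)]
    refine Finset.sum_congr rfl fun j _ => ?_
    have hset : (Ifree κ n ℓ ℓ').filter (fun q => q.1 = j)
        = {j} ×ˢ (Finset.univ.filter (fun c : Fin n => c ≠ ℓ j ∧ c ≠ ℓ' j)) := by
      ext q
      simp only [Ifree, Finset.mem_filter, Finset.mem_univ, true_and,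
        Finset.mem_product, Finset.mem_singleton]
      constructor
      · rintro ⟨⟨h1, h2⟩, h3⟩
        refine ⟨h3, ?_, ?_⟩ <;> rw [← h3] <;> assumption
      · rintro ⟨h3, h1, h2⟩
        refine ⟨⟨?_, ?_⟩, h3⟩ <;> rw [h3] <;> assumption
    rw [hset, Finset.card_product, Finset.card_singleton, one_mul]
    have hcompl : (Finset.univ.filter (fun c : Fin n => c ≠ ℓ j ∧ c ≠ ℓ' j))
        = Finset.univ \ ({ℓ j, ℓ' j} : Finset (Fin n)) := by
      ext c
      simp only [Finset.mem_filter, Finset.mem_univ, true_and, Finset.mem_sdiff,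
        Finset.mem_insert, Finset.mem_singleton]
      tauto
    rw [hcompl, Finset.card_sdiff_of_subset (Finset.subset_univ _), Finset.card_univ,
      Fintype.card_fin, hpair j]
  have hwt : ∑ j : Fin (2^κ), (if s j = true then 2 else 1) = 2^κ + wt κ s κ 0 := by
    rw [wt_global]
    have : ∀ j : Fin (2^κ), (if s j = true then 2 else 1)
        = 1 + (if s j = true then 1 else 0) := by
      intro j; by_cases hsj : s j = true <;> simp [hsj]
    rw [Finset.sum_congr rfl (fun j _ => this j), Finset.sum_add_distrib,
      Finset.sum_const, smul_eq_mul, mul_one, Finset.card_univ, Fintype.card_fin]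
  rw [hfib, ← hwt, ← Finset.sum_add_distrib]
  have : ∀ j : Fin (2^κ), (n - (if s j = true then 2 else 1))
      + (if s j = true then 2 else 1) = n := fun j => Nat.sub_add_cancel (hle j)
  rw [Finset.sum_congr rfl (fun j _ => this j), Finset.sum_const, smul_eq_mul,
    Finset.card_univ, Fintype.card_fin]

end KTB

theorem kTree_pair_expectation_bound
    (κ n m : ℕ) (hκ : 1 ≤ κ) (hn : 0 < n) (hm : 0 < m)
    (p : ℝ) (hp0 : 0 < p) (hp1 : p ≤ 1)
    (h3 : (30 : ℝ) < (m : ℝ) * p ^ (κ - 1)) (h4 : p < 1 / 30)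
    (s : Fin (2 ^ κ) → Bool) (hs : s ≠ fun _ => false)
    (σ : ℕ) (hσ : σ = stex κ s)
    (ℓ ℓ' : Fin (2 ^ κ) → Fin n)
    (hδ : ∀ i, s i = true ↔ ℓ i ≠ ℓ' i) :
    expPair κ n m p ℓ ℓ' ≤
      p ^ (2 ^ κ + σ + 1) / ((m : ℝ) * p ^ (κ + 1)) ^ 2 *
        ((1 - p)⁻¹ * (1 + 30 / ((m : ℝ) * p ^ κ))) ^ (2 ^ κ + σ + 1) := by
  classical
  have hmr : (0:ℝ) < m := by exact_mod_cast hm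
  have hpκ : (0:ℝ) < (m:ℝ)*p^κ := by positivity
  have h1p : 0 < 1 - p := by
    have : (1:ℝ)/30 < 1 := by norm_num
    linarith
  obtain ⟨c₀, hc₀def⟩ : ∃ c, c = 1 + 30/((m:ℝ)*p^κ) := ⟨_, rfl⟩
  rw [← hc₀def]
  have hc₀ : 1 ≤ c₀ := by rw [hc₀def]; exact le_add_of_nonneg_right (by positivity)
  have hc₀pos : 0 < c₀ := lt_of_lt_of_le one_pos hc₀
  have haroot := KTB.aff_root (κ := κ) hs
  obtain ⟨w, hwdef⟩ : ∃ w, w = KTB.wt κ s κ 0 := ⟨_, rfl⟩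
  obtain ⟨A, hAdef⟩ : ∃ a, a = KTB.Aexp κ s κ 0 := ⟨_, rfl⟩
  obtain ⟨P, hPdef⟩ : ∃ a, a = KTB.Pexp κ s κ 0 := ⟨_, rfl⟩
  have hσs : σ = KTB.sg κ s κ 0 := by rw [hσ, KTB.sg_eq_stex]
  have hA2 : A + 2 = 2^κ + w := by
    have h := KTB.Aexp_closed (κ := κ) (s := s) κ 0
    rw [haroot] at h
    simp at h
    omega
  have hP2 : P + 2*κ + 1 = 2^κ + σ := by
    have h := KTB.Pexp_closed (κ := κ) (s := s) κ 0
    rw [haroot] at h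
    simp at h
    omega
  have hwσ : w ≤ σ + 1 := by
    have h := KTB.wt_le_sg (κ := κ) (s := s) κ 0
    rw [haroot] at h
    simp at h
    omega
  have hκσ : κ ≤ σ := by
    have h := KTB.le_sg (κ := κ) (s := s) κ 0 haroot
    omega
  have hWc : ∀ e, e < κ → (KTB.Wc m p e : ℝ) ≤ c₀ * (m:ℝ) * p^e := by
    intro e he
    have hnn : (0:ℝ) ≤ (m:ℝ)*p^e := by positivity
    have hcard : ((KTB.Wc m p e : ℕ) : ℝ) ≤ (m:ℝ)*p^e + 1 := KTB.intRange_card_le hnn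
    have hpe : p^κ ≤ p^e := pow_le_pow_of_le_one hp0.le hp1 (by omega)
    have h30 : (30:ℝ) ≤ 30/((m:ℝ)*p^κ) * ((m:ℝ)*p^e) := by
      rw [div_mul_eq_mul_div, le_div_iff₀ hpκ]
      nlinarith
    have hident : c₀ * (m:ℝ) * p^e = (m:ℝ)*p^e + 30/((m:ℝ)*p^κ) * ((m:ℝ)*p^e) := by
      rw [hc₀def]; ring
    calc (KTB.Wc m p e : ℝ) ≤ (m:ℝ)*p^e + 1 := hcard
      _ ≤ c₀ * (m:ℝ) * p^e := by rw [hident]; linarith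
  have hbnd : (KTB.bnd κ s m p κ 0 : ℝ) ≤ (c₀*(m:ℝ))^A * p^P := by
    rw [hAdef, hPdef]
    exact KTB.bnd_le_real c₀ hmr hp0 hc₀pos hWc κ le_rfl 0
  have hNc := KTB.top_card_le κ n m p s ℓ ℓ' hδ
  have hIc := KTB.Ifree_card κ n hn s ℓ ℓ' hδ
  rw [← hwdef] at hIc
  have hEsum : 2^κ*n = (KTB.Ifree κ n ℓ ℓ').card + (2^κ+w) := by clear hNc; omega
  have hEA : 2^κ + w = A + 2 := by clear hNc; omega
  have hEP : 2^κ + σ + 1 = P + (2*κ+2) := by clear hNc; omega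
  have hEle : A ≤ 2^κ + σ + 1 := by clear hNc; omega
  obtain ⟨Mc, hMcdef⟩ : ∃ x, x = (intRange ((m:ℕ):ℝ)).card := ⟨_, rfl⟩
  rw [← hMcdef] at hNc
  have hMcm : m ≤ Mc := by rw [hMcdef]; exact KTB.intRange_card_ge m
  have hMcr : (0:ℝ) < (Mc:ℝ) := by
    have : 0 < Mc := lt_of_lt_of_le hm hMcm
    exact_mod_cast this
  have hFcn : Fintype.card (Fin (2^κ) → Fin n → ↥(intRange ((m:ℕ):ℝ))) = Mc ^ (2^κ * n) := by
    rw [hMcdef, Fintype.card_fun, Fintype.card_fun, Fintype.card_coe, Fintype.card_fin,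
      Fintype.card_fin, ← pow_mul, Nat.mul_comm]
  have hchain1 : expPair κ n m p ℓ ℓ' ≤ (KTB.bnd κ s m p κ 0 : ℝ) / (Mc:ℝ)^(2^κ + w) := by
    rw [expPair]
    have hnum : ((Nat.card {L : Fin (2 ^ κ) → Fin n → ↥(intRange (m : ℝ)) //
        Successful κ n m p (fun i j => (L i j : ℤ)) ℓ ∧
          Successful κ n m p (fun i j => (L i j : ℤ)) ℓ'} : ℕ) : ℝ)
        ≤ (Mc:ℝ)^((KTB.Ifree κ n ℓ ℓ').card) * (KTB.bnd κ s m p κ 0 : ℝ) := by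
      rw [← Nat.cast_pow, ← Nat.cast_mul]
      exact_mod_cast hNc
    have hden : (Fintype.card (Fin (2^κ) → Fin n → ↥(intRange ((m:ℕ):ℝ))) : ℝ)
        = (Mc:ℝ)^(2^κ * n) := by
      rw [hFcn]
      push_cast
      ring
    rw [hden]
    calc _ ≤ ((Mc:ℝ)^((KTB.Ifree κ n ℓ ℓ').card) * (KTB.bnd κ s m p κ 0 : ℝ))
          / (Mc:ℝ)^(2^κ * n) := by
          apply div_le_div_of_nonneg_right hnum (by positivity)
      _ = (KTB.bnd κ s m p κ 0 : ℝ) / (Mc:ℝ)^(2^κ + w) := by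
          rw [hEsum, pow_add,
            mul_div_mul_left _ _ (ne_of_gt (pow_pos hMcr _))]
  have hchain2 : (KTB.bnd κ s m p κ 0 : ℝ) / (Mc:ℝ)^(2^κ + w)
      ≤ ((c₀*(m:ℝ))^A * p^P) / ((m:ℝ)^(2^κ+w)) := by
    apply div_le_div₀ (by positivity) hbnd (by positivity)
    exact pow_le_pow_left₀ hmr.le (by exact_mod_cast hMcm) _
  have hchain3 : ((c₀*(m:ℝ))^A * p^P) / ((m:ℝ)^(2^κ+w)) = (p^P/(m:ℝ)^2) * c₀^A := by
    rw [mul_pow, hEA, pow_add]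
    field_simp
  have hrhs : p ^ (2 ^ κ + σ + 1) / ((m : ℝ) * p ^ (κ + 1)) ^ 2 = p^P/(m:ℝ)^2 := by
    rw [hEP, pow_add,
      mul_pow, ← pow_mul, show (κ+1)*2 = 2*κ+2 from by ring]
    rw [mul_div_mul_right _ _ (ne_of_gt (pow_pos hp0 (2*κ+2)))]
  have hQ : c₀^A ≤ ((1-p)⁻¹ * c₀)^(2^κ+σ+1) := by
    have hinv : 1 ≤ (1-p)⁻¹ := (one_le_inv₀ h1p).mpr (by linarith)
    have hbase : c₀ ≤ (1-p)⁻¹ * c₀ := le_mul_of_one_le_left hc₀pos.le hinv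
    calc c₀^A ≤ ((1-p)⁻¹*c₀)^A := pow_le_pow_left₀ hc₀pos.le hbase A
      _ ≤ ((1-p)⁻¹*c₀)^(2^κ+σ+1) := pow_le_pow_right₀ (le_trans hc₀ hbase) hEle
  calc expPair κ n m p ℓ ℓ' ≤ (KTB.bnd κ s m p κ 0 : ℝ) / (Mc:ℝ)^(2^κ + w) := hchain1
    _ ≤ ((c₀*(m:ℝ))^A * p^P) / ((m:ℝ)^(2^κ+w)) := hchain2
    _ = (p^P/(m:ℝ)^2) * c₀^A := hchain3
    _ ≤ (p^P/(m:ℝ)^2) * ((1-p)⁻¹*c₀)^(2^κ+σ+1) :=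
        mul_le_mul_of_nonneg_left hQ (by positivity)
    _ = p ^ (2 ^ κ + σ + 1) / ((m : ℝ) * p ^ (κ + 1)) ^ 2 * ((1-p)⁻¹*c₀) ^ (2 ^ κ + σ + 1) := by
        rw [hrhs]
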